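/- Let K be a field and let α : ℕ → ℕ → K satisfy α a b ≠ 0 for all a, b ≥ 1, the unitality conditions α 1 a = 1 and α a 1 = 1 for all a ≥ 1, the parallel equation α a b * α (a+b-1) c = α a c * α (a+c-1) b, and the nested equation α a b * α (a+b-1) c = α a (b+c-1) * α b c, for all a, b, c ≥ 1. Then there exists λ : ℕ → K with λ n ≠ 0 for all n ≥ 1, λ 1 = 1, and α a b * λ (a+b-1) = λ a * λ b for all a, b ≥ 1. -/

import Mathlib

/-- Uniqueness of the operad structure on the positive exponential species `E₊` up to
isomorphism: any coefficient system `α` satisfying the unitality, parallel and nested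
functional equations is a coboundary, i.e. of the form
`α a b = λ a * λ b / λ (a + b - 1)`. -/
theorem exists_coboundary_of_cocycle
    {K : Type*} [Field K] (α : ℕ → ℕ → K)
    (hne : ∀ a b : ℕ, 1 ≤ a → 1 ≤ b → α a b ≠ 0)
    (hu1 : ∀ a : ℕ, 1 ≤ a → α 1 a = 1)
    (hu2 : ∀ a : ℕ, 1 ≤ a → α a 1 = 1)
    (hpar : ∀ a b c : ℕ, 1 ≤ a → 1 ≤ b → 1 ≤ c →
      α a b * α (a + b - 1) c = α a c * α (a + c - 1) b)
    (hnest : ∀ a b c : ℕ, 1 ≤ a → 1 ≤ b → 1 ≤ c →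
      α a b * α (a + b - 1) c = α a (b + c - 1) * α b c) :
    ∃ lam : ℕ → K, (∀ n : ℕ, 1 ≤ n → lam n ≠ 0) ∧ lam 1 = 1 ∧
      ∀ a b : ℕ, 1 ≤ a → 1 ≤ b → α a b * lam (a + b - 1) = lam a * lam b := by
  set lam : ℕ → K := fun n => (∏ k ∈ Finset.Ico 1 n, α k 2)⁻¹ with hlam
  have hprodne : ∀ n : ℕ, (∏ k ∈ Finset.Ico 1 n, α k 2) ≠ 0 := by
    intro n
    refine Finset.prod_ne_zero_iff.mpr ?_
    intro k hk
    exact hne k 2 (Finset.mem_Ico.mp hk).1 one_le_two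
  have hlamne : ∀ n : ℕ, lam n ≠ 0 := fun n => inv_ne_zero (hprodne n)
  have hlam1 : lam 1 = 1 := by simp [hlam]
  have hstep : ∀ n : ℕ, 1 ≤ n → lam (n + 1) = lam n * (α n 2)⁻¹ := by
    intro n hn
    simp only [hlam]
    rw [Finset.prod_Ico_succ_top hn, mul_inv]
  clear_value lam
  refine ⟨lam, fun n _ => hlamne n, hlam1, ?_⟩
  intro a b ha hb
  induction b with
  | zero => omega
  | succ b ih =>
    rcases Nat.eq_or_lt_of_le hb with h | h
    · -- b + 1 = 1
      have : b = 0 := by omega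
      subst this
      simp [hu2 a ha, hlam1]
    · have hb1 : 1 ≤ b := by omega
      have key := hnest a b 2 ha hb1 one_le_two
      have hab1 : 1 ≤ a + b - 1 := by omega
      have hbc : b + 2 - 1 = b + 1 := by omega
      rw [hbc] at key
      have heq : α a (b + 1) = α a b * α (a + b - 1) 2 / α b 2 :=
        (eq_div_iff (hne b 2 hb1 one_le_two)).mpr key.symm
      have hab : a + (b + 1) - 1 = (a + b - 1) + 1 := by omega
      rw [heq, hab, hstep (a + b - 1) hab1, hstep b hb1]
      have ihb := ih hb1
      field_simp [hlamne a, hlamne b, hlamne (a + b - 1),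
        hne b 2 hb1 one_le_two, hne (a + b - 1) 2 hab1 one_le_two]
      linear_combination ihb
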